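/- Let s and r be the ℚ-algebra automorphisms of ℚ[X, Y] determined by s: X ↦ Y, Y ↦ X and r: X ↦ −Y, Y ↦ −X. A polynomial p ∈ ℚ[X, Y] satisfies s(p) = p and r(p) = p if and only if p belongs to the ℚ-subalgebra generated by (X + Y)² and XY. -/

import Mathlib

open MvPolynomial

section Aux

local notation "R2" => MvPolynomial (Fin 2) ℚ

/-- the swap of a multidegree -/
noncomputable def sw (m : Fin 2 →₀ ℕ) : Fin 2 →₀ ℕ :=
  Finsupp.mapDomain (Equiv.swap (0 : Fin 2) 1) m

lemma sw_apply (m : Fin 2 →₀ ℕ) (i : Fin 2) :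
    sw m i = m (Equiv.swap (0 : Fin 2) 1 i) := by
  rw [sw, Finsupp.mapDomain_equiv_apply]
  simp

lemma sw_apply0 (m : Fin 2 →₀ ℕ) : sw m 0 = m 1 := by
  rw [sw_apply]; norm_num

lemma sw_apply1 (m : Fin 2 →₀ ℕ) : sw m 1 = m 0 := by
  rw [sw_apply]; norm_num

lemma sw_sw (m : Fin 2 →₀ ℕ) : sw (sw m) = m := by
  ext i
  rw [sw_apply, sw_apply, Equiv.swap_apply_self]

lemma sw_eq_iff {m m' : Fin 2 →₀ ℕ} : sw m = m' ↔ m = sw m' := by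
  constructor
  · rintro rfl; rw [sw_sw]
  · rintro rfl; rw [sw_sw]

lemma monomial_fin2 (m : Fin 2 →₀ ℕ) (c : ℚ) :
    (monomial m c : R2) = C c * X 0 ^ (m 0) * X 1 ^ (m 1) := by
  rw [monomial_eq, Finsupp.prod_fintype]
  · rw [Fin.prod_univ_two]; ring
  · intro i; simp

lemma swap_eq (p : R2) :
    aeval ![X 1, X 0] p = rename (Equiv.swap (0:Fin 2) 1) p := by
  induction p using MvPolynomial.induction_on with
  | C a => simp
  | add p q hp hq => rw [map_add, map_add, hp, hq]
  | mul_X p i hp =>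
      rw [map_mul, map_mul, hp, aeval_X, rename_X]
      fin_cases i <;> simp [Equiv.swap_apply_def]

lemma coeff_swap (p : R2) (m : Fin 2 →₀ ℕ) :
    coeff m (aeval ![X 1, X 0] p) = coeff (sw m) p := by
  rw [swap_eq]
  have := coeff_rename_mapDomain (⇑(Equiv.swap (0:Fin 2) 1)) (Equiv.injective _) p (sw m)
  rw [← this]
  congr 1
  rw [sw, ← Finsupp.mapDomain_comp]
  simp only [Equiv.swap_apply_self, Function.comp_def]
  exact (Finsupp.mapDomain_id).symm

lemma comp_neg_swap (q : R2) :
    aeval (![-X 0, -X 1] : Fin 2 → R2) (aeval (R := ℚ) (![X 1, X 0] : Fin 2 → R2) q)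
      = aeval (![-X 1, -X 0] : Fin 2 → R2) q := by
  induction q using MvPolynomial.induction_on with
  | C a => simp
  | add p q hp hq => rw [map_add, map_add, map_add, hp, hq]
  | mul_X p i hp =>
      rw [map_mul, map_mul, map_mul, hp, aeval_X, aeval_X]
      fin_cases i <;> simp

lemma neg_monomial (n : Fin 2 →₀ ℕ) (c : ℚ) :
    aeval (![-X 0, -X 1] : Fin 2 → R2) (monomial n c : R2)
      = (-1:ℚ)^(n 0 + n 1) • (monomial n c : R2) := by
  rw [monomial_fin2, MvPolynomial.smul_eq_C_mul]
  rw [map_mul, map_mul, aeval_C, map_pow, map_pow, aeval_X, aeval_X]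
  simp only [Matrix.cons_val_zero, Matrix.cons_val_one, Matrix.head_cons]
  have hC : (C ((-1:ℚ)^(n 0 + n 1)) : R2) = (-1)^(n 0 + n 1) := by
    rw [C_pow]; norm_num
  rw [neg_pow, neg_pow, algebraMap_eq, hC, pow_add]
  ring

lemma coeff_neg_aeval (p : R2) (m : Fin 2 →₀ ℕ) :
    coeff m (aeval (![-X 0, -X 1] : Fin 2 → R2) p) = (-1:ℚ)^(m 0 + m 1) * coeff m p := by
  induction p using MvPolynomial.induction_on' with
  | monomial n c =>
      rw [neg_monomial, coeff_smul, coeff_monomial]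
      by_cases h : n = m
      · subst h; simp [smul_eq_mul]
      · simp [h]
  | add p q hp hq => rw [map_add, coeff_add, hp, hq, coeff_add]; ring

noncomputable abbrev Ssub : Subalgebra ℚ R2 :=
  Algebra.adjoin ℚ ({(X 0 + X 1) ^ 2, X 0 * X 1} : Set R2)

lemma mem1 : ((X 0 + X 1) ^ 2 : R2) ∈ Ssub := Algebra.subset_adjoin (by simp)

lemma mem2 : (X 0 * X 1 : R2) ∈ Ssub := Algebra.subset_adjoin (by simp)

lemma C_mem (c : ℚ) : (C c : R2) ∈ Ssub := by
  rw [← algebraMap_eq]; exact Ssub.algebraMap_mem c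

lemma sq_mem : (X 0 ^ 2 + X 1 ^ 2 : R2) ∈ Ssub := by
  have h : (X 0 ^ 2 + X 1 ^ 2 : R2) = (X 0 + X 1) ^ 2 - 2 * (X 0 * X 1) := by ring
  rw [h]
  exact sub_mem mem1 (mul_mem (Subalgebra.natCast_mem _ 2) mem2)

lemma powsum_mem : ∀ k : ℕ, (X 0 ^ (2 * k) + X 1 ^ (2 * k) : R2) ∈ Ssub := by
  intro k
  induction k using Nat.strong_induction_on with
  | _ k ih =>
    match k with
    | 0 => simpa using add_mem Ssub.one_mem Ssub.one_mem
    | 1 => simpa using sq_mem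
    | (k+2) =>
      have h : (X 0 ^ (2 * (k+2)) + X 1 ^ (2 * (k+2)) : R2)
          = (X 0 ^ 2 + X 1 ^ 2) * (X 0 ^ (2 * (k+1)) + X 1 ^ (2 * (k+1)))
            - (X 0 * X 1) ^ 2 * (X 0 ^ (2 * k) + X 1 ^ (2 * k)) := by ring
      rw [h]
      exact sub_mem (mul_mem sq_mem (ih (k+1) (by omega)))
        (mul_mem (pow_mem mem2 2) (ih k (by omega)))

lemma symmon_mem (a b : ℕ) (hab : Even (a + b)) :
    (X 0 ^ a * X 1 ^ b + X 0 ^ b * X 1 ^ a : R2) ∈ Ssub := by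
  wlog hle : b ≤ a generalizing a b
  · have := this b a (by rwa [Nat.add_comm]) (by omega)
    rwa [add_comm] at this
  obtain ⟨k, hk⟩ : ∃ k, a - b = 2 * k := by
    rcases hab with ⟨t, ht⟩
    exact ⟨t - b, by omega⟩
  have ha : a = b + 2 * k := by omega
  subst ha
  have h : (X 0 ^ (b + 2 * k) * X 1 ^ b + X 0 ^ b * X 1 ^ (b + 2 * k) : R2)
      = (X 0 * X 1) ^ b * (X 0 ^ (2 * k) + X 1 ^ (2 * k)) := by ring
  rw [h]
  exact mul_mem (pow_mem mem2 b) (powsum_mem k)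

lemma key : ∀ (n : ℕ) (p : R2), p.support.card ≤ n →
    (∀ m, coeff m p = coeff (sw m) p) →
    (∀ m : Fin 2 →₀ ℕ, ¬ Even (m 0 + m 1) → coeff m p = 0) → p ∈ Ssub := by
  intro n
  induction n with
  | zero =>
    intro p hcard _ _
    have : p = 0 := by
      rw [← support_eq_empty, ← Finset.card_eq_zero]
      omega
    rw [this]; exact zero_mem _
  | succ n ih =>
    intro p hcard hs he
    by_cases hp : p = 0
    · rw [hp]; exact zero_mem _
    obtain ⟨m, hm⟩ := (support_nonempty.mpr hp)
    set c := coeff m p with hc_def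
    have hc : c ≠ 0 := mem_support_iff.mp hm
    have hev : Even (m 0 + m 1) := by
      by_contra h
      exact hc (he m h)
    have hevsw : Even (sw m 0 + sw m 1) := by
      rwa [sw_apply0, sw_apply1, Nat.add_comm]
    -- construct q
    obtain ⟨q, qmem, hqm, hqsw, hqo, hqsym⟩ :
        ∃ q : R2, q ∈ Ssub ∧ coeff m q = c ∧ coeff (sw m) q = c ∧
          (∀ m', m' ≠ m → m' ≠ sw m → coeff m' q = 0) ∧
          (∀ m', coeff m' q = coeff (sw m') q) := by
      by_cases hd : sw m = m
      · refine ⟨monomial m c, ?_, ?_, ?_, ?_, ?_⟩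
        · have hba : m 1 = m 0 := by rw [← sw_apply0, hd]
          rw [monomial_fin2, hba, mul_assoc, ← mul_pow]
          exact mul_mem (C_mem c) (pow_mem mem2 _)
        · rw [coeff_monomial, if_pos rfl]
        · rw [hd, coeff_monomial, if_pos rfl]
        · intro m' h1 _; rw [coeff_monomial, if_neg (fun h => h1 h.symm)]
        · intro m'
          rw [coeff_monomial, coeff_monomial]
          by_cases h : m = m'
          · rw [if_pos h, if_pos (by rw [← h, hd])]
          · rw [if_neg h,
              if_neg (fun h2 => h (hd.symm.trans ((congrArg sw h2).trans (sw_sw m'))))]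
      · refine ⟨monomial m c + monomial (sw m) c, ?_, ?_, ?_, ?_, ?_⟩
        · have h : (monomial m c + monomial (sw m) c : R2)
              = C c * (X 0 ^ (m 0) * X 1 ^ (m 1) + X 0 ^ (m 1) * X 1 ^ (m 0)) := by
            rw [monomial_fin2, monomial_fin2, sw_apply0, sw_apply1]; ring
          rw [h]
          exact mul_mem (C_mem c) (symmon_mem _ _ hev)
        · rw [coeff_add, coeff_monomial, coeff_monomial, if_pos rfl, if_neg hd, add_zero]
        · rw [coeff_add, coeff_monomial, coeff_monomial, if_pos rfl,
            if_neg (fun h => hd h.symm), zero_add]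
        · intro m' h1 h2
          rw [coeff_add, coeff_monomial, coeff_monomial,
            if_neg (fun h => h1 h.symm), if_neg (fun h => h2 h.symm), add_zero]
        · intro m'
          rw [coeff_add, coeff_add, coeff_monomial, coeff_monomial,
            coeff_monomial, coeff_monomial]
          have e1 : (m = sw m') ↔ (sw m = m') := sw_eq_iff.symm
          have e2 : (sw m = sw m') ↔ (m = m') :=
            ⟨fun h => by rw [← sw_sw m, h, sw_sw], fun h => by rw [h]⟩
          rw [if_congr e1 rfl rfl, if_congr e2 rfl rfl, add_comm]
      -- end construct
    have hpq : ∀ m', m' ≠ m → m' ≠ sw m → coeff m' (p - q) = coeff m' p := by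
      intro m' h1 h2
      rw [coeff_sub, hqo m' h1 h2, sub_zero]
    have hzero : coeff m (p - q) = 0 ∧ coeff (sw m) (p - q) = 0 := by
      constructor
      · rw [coeff_sub, hqm, ← hc_def, sub_self]
      · rw [coeff_sub, hqsw, ← hs m, ← hc_def, sub_self]
    have hsubset : (p - q).support ⊆ p.support.erase m := by
      intro m' hm'
      rw [mem_support_iff] at hm'
      have h1 : m' ≠ m := fun h => hm' (h ▸ hzero.1)
      have h2 : m' ≠ sw m := fun h => hm' (h ▸ hzero.2)
      rw [Finset.mem_erase, mem_support_iff]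
      exact ⟨h1, by rwa [hpq m' h1 h2] at hm'⟩
    have hcard' : (p - q).support.card ≤ n := by
      have := Finset.card_le_card hsubset
      have := Finset.card_erase_of_mem hm
      omega
    have hmem : p - q ∈ Ssub := by
      apply ih (p - q) hcard'
      · intro m'
        rw [coeff_sub, coeff_sub, hs m', hqsym m']
      · intro m' hodd
        have h1 : m' ≠ m := fun h => hodd (h ▸ hev)
        have h2 : m' ≠ sw m := fun h => hodd (h ▸ hevsw)
        rw [hpq m' h1 h2]
        exact he m' hodd
    have : p = (p - q) + q := by ring
    rw [this]
    exact add_mem hmem qmem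

end Aux

/-- A polynomial `p ∈ ℚ[X, Y]` is fixed by both `ℚ`-algebra automorphisms
`s : X ↦ Y, Y ↦ X` and `r : X ↦ −Y, Y ↦ −X` if and only if it belongs to the
`ℚ`-subalgebra generated by `(X + Y)²` and `XY`. -/
theorem invariants_swap_and_antidiagonal (p : MvPolynomial (Fin 2) ℚ) :
    (aeval ![X 1, X 0] p = p ∧ aeval ![-X 1, -X 0] p = p) ↔
      p ∈ Algebra.adjoin ℚ
        ({(X 0 + X 1) ^ 2, X 0 * X 1} : Set (MvPolynomial (Fin 2) ℚ)) := by
  constructor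
  · rintro ⟨h1, h2⟩
    have hneg : aeval (![-X 0, -X 1] : Fin 2 → MvPolynomial (Fin 2) ℚ) p = p := by
      calc aeval (![-X 0, -X 1] : Fin 2 → MvPolynomial (Fin 2) ℚ) p
          = aeval (![-X 0, -X 1] : Fin 2 → MvPolynomial (Fin 2) ℚ)
            (aeval (![X 1, X 0] : Fin 2 → MvPolynomial (Fin 2) ℚ) p) := by rw [h1]
        _ = aeval (![-X 1, -X 0] : Fin 2 → MvPolynomial (Fin 2) ℚ) p := comp_neg_swap p
        _ = p := h2
    apply key p.support.card p le_rfl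
    · intro m
      conv_lhs => rw [← h1]
      exact coeff_swap p m
    · intro m hodd
      have h := coeff_neg_aeval p m
      rw [hneg, (Nat.not_even_iff_odd.mp hodd).neg_one_pow, neg_one_mul] at h
      linarith
  · intro hp
    have hfix : ∀ x ∈ Algebra.adjoin ℚ
        ({(X 0 + X 1) ^ 2, X 0 * X 1} : Set (MvPolynomial (Fin 2) ℚ)),
        aeval ![X 1, X 0] x = x ∧ aeval ![-X 1, -X 0] x = x := by
      intro x hx
      induction hx using Algebra.adjoin_induction with
      | mem x hx =>
        rcases hx with h | h <;> subst h <;> constructor <;>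
          · simp only [map_pow, map_add, map_mul, aeval_X, Matrix.cons_val_zero,
              Matrix.cons_val_one, Matrix.head_cons]
            ring
      | algebraMap r => constructor <;> simp
      | add x y hx hy hx' hy' =>
        exact ⟨by rw [map_add, hx'.1, hy'.1], by rw [map_add, hx'.2, hy'.2]⟩
      | mul x y hx hy hx' hy' =>
        exact ⟨by rw [map_mul, hx'.1, hy'.1], by rw [map_mul, hx'.2, hy'.2]⟩
    exact hfix p hp
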